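/- In QHC, ⊢ ∇(!p ∧ !q) ↔ !p ∧ !q, ⊢ ∇(!p → !q) ↔ (!p → !q), ⊢ □(?α ∧ ?β) ↔ ?α ∧ ?β, and ⊢ □(?α ∨ ?β) ↔ ?α ∨ ?β, where ∇γ := !?γ and □r := ?!r. -/
import Mathlib


/- Problem (intuitionistic) formulas and proposition (classical) formulas of QHC. -/
mutual
inductive PF : Type
  | var : Nat → PF
  | bot : PF
  | and : PF → PF → PF
  | or : PF → PF → PF
  | imp : PF → PF → PF
  | bang : CF → PF
inductive CF : Type
  | var : Nat → CF
  | fls : CF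
  | and : CF → CF → CF
  | or : CF → CF → CF
  | imp : CF → CF → CF
  | quest : PF → CF
end

def PF.neg (α : PF) : PF := α.imp PF.bot
def CF.neg (p : CF) : CF := p.imp CF.fls
def PF.iff (α β : PF) : PF := (α.imp β).and (β.imp α)
def CF.iff (p q : CF) : CF := (p.imp q).and (q.imp p)
def CF.box (p : CF) : CF := CF.quest (PF.bang p)
def PF.nabla (α : PF) : PF := PF.bang (CF.quest α)

/- Derivability in QHC, parameterized by a set `Ax` of extra problem axioms
(used to treat the axiom ¬!0 and its variants uniformly). Intuitionistic logic
on problems, classical logic on propositions, the rules α ⊢ ?α and p ⊢ !p, and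
the mixed axioms ?!p → p, α → !?α, !(p→q) → (!p → !q), ?(α→β) → (?α → ?β). -/
mutual
inductive ProvP (Ax : PF → Prop) : PF → Prop
  | axm {α} : Ax α → ProvP Ax α
  | mp {α β} : ProvP Ax (α.imp β) → ProvP Ax α → ProvP Ax β
  | ak (α β : PF) : ProvP Ax (α.imp (β.imp α))
  | as (α β γ : PF) : ProvP Ax ((α.imp (β.imp γ)).imp ((α.imp β).imp (α.imp γ)))
  | andI (α β : PF) : ProvP Ax (α.imp (β.imp (α.and β)))
  | andE1 (α β : PF) : ProvP Ax ((α.and β).imp α)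
  | andE2 (α β : PF) : ProvP Ax ((α.and β).imp β)
  | orI1 (α β : PF) : ProvP Ax (α.imp (α.or β))
  | orI2 (α β : PF) : ProvP Ax (β.imp (α.or β))
  | orE (α β γ : PF) : ProvP Ax ((α.imp γ).imp ((β.imp γ).imp ((α.or β).imp γ)))
  | exf (α : PF) : ProvP Ax (PF.bot.imp α)
  | bangIntro {p} : ProvC Ax p → ProvP Ax (PF.bang p)
  | bangImp (p q : CF) : ProvP Ax ((PF.bang (p.imp q)).imp ((PF.bang p).imp (PF.bang q)))
  | bangQuest (α : PF) : ProvP Ax (α.imp (PF.bang (CF.quest α)))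
inductive ProvC (Ax : PF → Prop) : CF → Prop
  | mp {p q} : ProvC Ax (p.imp q) → ProvC Ax p → ProvC Ax q
  | ak (p q : CF) : ProvC Ax (p.imp (q.imp p))
  | as (p q r : CF) : ProvC Ax ((p.imp (q.imp r)).imp ((p.imp q).imp (p.imp r)))
  | andI (p q : CF) : ProvC Ax (p.imp (q.imp (p.and q)))
  | andE1 (p q : CF) : ProvC Ax ((p.and q).imp p)
  | andE2 (p q : CF) : ProvC Ax ((p.and q).imp q)
  | orI1 (p q : CF) : ProvC Ax (p.imp (p.or q))
  | orI2 (p q : CF) : ProvC Ax (q.imp (p.or q))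
  | orE (p q r : CF) : ProvC Ax ((p.imp r).imp ((q.imp r).imp ((p.or q).imp r)))
  | exf (p : CF) : ProvC Ax (CF.fls.imp p)
  | lem (p : CF) : ProvC Ax (p.or (p.imp CF.fls))
  | questIntro {α} : ProvP Ax α → ProvC Ax (CF.quest α)
  | questImp (α β : PF) : ProvC Ax ((CF.quest (α.imp β)).imp ((CF.quest α).imp (CF.quest β)))
  | questBang (p : CF) : ProvC Ax ((CF.quest (PF.bang p)).imp p)
end

/-- The axiom (!⊥): ¬!0. -/
def QHCAx : PF → Prop := fun α => α = (PF.bang CF.fls).imp PF.bot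

/-- Derivability of a problem in QHC. -/
def PrvP (α : PF) : Prop := ProvP QHCAx α
/-- Derivability of a proposition in QHC. -/
def PrvC (p : CF) : Prop := ProvC QHCAx p

section Comb

variable {Ax : PF → Prop}

/-! Combinators for the problem (P) side. -/

/-- Lift a theorem under a hypothesis. -/
theorem pLift {a b : PF} (h : ProvP Ax b) : ProvP Ax (a.imp b) :=
  ProvP.mp (ProvP.ak _ _) h

/-- Modus ponens under a hypothesis. -/
theorem pMp2 {a b c : PF} (h1 : ProvP Ax (a.imp (b.imp c)))
    (h2 : ProvP Ax (a.imp b)) : ProvP Ax (a.imp c) :=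
  ProvP.mp (ProvP.mp (ProvP.as _ _ _) h1) h2

/-- Composition. -/
theorem pComp {a b c : PF} (h1 : ProvP Ax (a.imp b)) (h2 : ProvP Ax (b.imp c)) :
    ProvP Ax (a.imp c) :=
  pMp2 (pLift h2) h1

/-- Apply a premise to an implication under a hypothesis. -/
theorem pApp {a b c : PF} (h1 : ProvP Ax (a.imp (b.imp c))) (h2 : ProvP Ax b) :
    ProvP Ax (a.imp c) :=
  pMp2 h1 (pLift h2)

/-- Precompose inside the antecedent: from `d → b`, get `(b→c) → (d→c)`. -/
theorem pLiftL {b c d : PF} (h : ProvP Ax (d.imp b)) :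
    ProvP Ax ((b.imp c).imp (d.imp c)) :=
  pApp (pComp (ProvP.ak (b.imp c) d) (ProvP.as d b c)) h

/-- Conjunction introduction under a hypothesis. -/
theorem pAndIntro {a b c : PF} (h1 : ProvP Ax (a.imp b)) (h2 : ProvP Ax (a.imp c)) :
    ProvP Ax (a.imp (b.and c)) :=
  pMp2 (pComp h1 (ProvP.andI b c)) h2

theorem pIff {a b : PF} (h1 : ProvP Ax (a.imp b)) (h2 : ProvP Ax (b.imp a)) :
    ProvP Ax (a.iff b) :=
  ProvP.mp (ProvP.mp (ProvP.andI _ _) h1) h2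

/-! Combinators for the proposition (C) side. -/

theorem cLift {a b : CF} (h : ProvC Ax b) : ProvC Ax (a.imp b) :=
  ProvC.mp (ProvC.ak _ _) h

theorem cMp2 {a b c : CF} (h1 : ProvC Ax (a.imp (b.imp c)))
    (h2 : ProvC Ax (a.imp b)) : ProvC Ax (a.imp c) :=
  ProvC.mp (ProvC.mp (ProvC.as _ _ _) h1) h2

theorem cComp {a b c : CF} (h1 : ProvC Ax (a.imp b)) (h2 : ProvC Ax (b.imp c)) :
    ProvC Ax (a.imp c) :=
  cMp2 (cLift h2) h1

theorem cLiftR {b c d : CF} (h : ProvC Ax (c.imp d)) :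
    ProvC Ax ((b.imp c).imp (b.imp d)) :=
  ProvC.mp (ProvC.as b c d) (cLift h)

theorem cIff {a b : CF} (h1 : ProvC Ax (a.imp b)) (h2 : ProvC Ax (b.imp a)) :
    ProvC Ax (a.iff b) :=
  ProvC.mp (ProvC.mp (ProvC.andI _ _) h1) h2

/-! Mixed derived facts. -/

/-- From a C-provable implication `p → q`, get `!p → !q`. -/
theorem bangMono {p q : CF} (h : ProvC Ax (p.imp q)) :
    ProvP Ax ((PF.bang p).imp (PF.bang q)) :=
  ProvP.mp (ProvP.bangImp p q) (ProvP.bangIntro h)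

/-- From a P-provable implication `α → β`, get `?α → ?β`. -/
theorem questMono {α β : PF} (h : ProvP Ax (α.imp β)) :
    ProvC Ax ((CF.quest α).imp (CF.quest β)) :=
  ProvC.mp (ProvC.questImp α β) (ProvC.questIntro h)

/-- `□` is monotone: from `p → q`, get `□p → □q`. -/
theorem boxMono {p q : CF} (h : ProvC Ax (p.imp q)) :
    ProvC Ax ((p.box).imp (q.box)) :=
  questMono (bangMono h)

/-- `?α → □?α`. -/
theorem questBoxed (α : PF) : ProvC Ax ((CF.quest α).imp (CF.quest α).box) :=
  questMono (ProvP.bangQuest α)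

/-- `!p ∧ !q → !(p ∧ q)`, curried. -/
theorem bangAnd (p q : CF) :
    ProvP Ax ((PF.bang p).imp ((PF.bang q).imp (PF.bang (p.and q)))) :=
  pComp (bangMono (ProvC.andI p q)) (ProvP.bangImp q (p.and q))

end Comb

theorem qhc_fixed_points :
    (∀ p q : CF, PrvP (PF.iff (PF.nabla ((PF.bang p).and (PF.bang q)))
      ((PF.bang p).and (PF.bang q)))) ∧
    (∀ p q : CF, PrvP (PF.iff (PF.nabla ((PF.bang p).imp (PF.bang q)))
      ((PF.bang p).imp (PF.bang q)))) ∧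
    (∀ α β : PF, PrvC (CF.iff (CF.box ((CF.quest α).and (CF.quest β)))
      ((CF.quest α).and (CF.quest β)))) ∧
    (∀ α β : PF, PrvC (CF.iff (CF.box ((CF.quest α).or (CF.quest β)))
      ((CF.quest α).or (CF.quest β)))) := by
  refine ⟨fun p q => ?_, fun p q => ?_, fun α β => ?_, fun α β => ?_⟩
  · -- ∇(!p ∧ !q) ↔ !p ∧ !q
    set γ := (PF.bang p).and (PF.bang q) with hγ
    have s1 : ProvP QHCAx ((PF.nabla γ).imp (PF.bang p)) :=
      bangMono (cComp (questMono (ProvP.andE1 _ _)) (ProvC.questBang p))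
    have s2 : ProvP QHCAx ((PF.nabla γ).imp (PF.bang q)) :=
      bangMono (cComp (questMono (ProvP.andE2 _ _)) (ProvC.questBang q))
    exact pIff (pAndIntro s1 s2) (ProvP.bangQuest γ)
  · -- ∇(!p → !q) ↔ (!p → !q)
    set γ := (PF.bang p).imp (PF.bang q) with hγ
    have c2 : ProvC QHCAx ((CF.quest γ).imp
        ((CF.quest (PF.bang p)).imp q)) :=
      cComp (ProvC.questImp (PF.bang p) (PF.bang q)) (cLiftR (ProvC.questBang q))
    have H : ProvP QHCAx ((PF.nabla γ).imp
        ((PF.bang (CF.quest (PF.bang p))).imp (PF.bang q))) :=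
      pComp (bangMono c2) (ProvP.bangImp (CF.quest (PF.bang p)) q)
    have K : ProvP QHCAx
        (((PF.bang (CF.quest (PF.bang p))).imp (PF.bang q)).imp γ) :=
      pLiftL (ProvP.bangQuest (PF.bang p))
    exact pIff (pComp H K) (ProvP.bangQuest γ)
  · -- □(?α ∧ ?β) ↔ ?α ∧ ?β
    set r := (CF.quest α).and (CF.quest β) with hr
    have e1 : ProvC QHCAx (r.imp (CF.quest α).box) :=
      cComp (ProvC.andE1 _ _) (questBoxed α)
    have e2 : ProvC QHCAx (r.imp (CF.quest β).box) :=
      cComp (ProvC.andE2 _ _) (questBoxed β)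
    have t : ProvP QHCAx ((PF.bang (CF.quest α)).imp
        ((PF.bang (CF.quest β)).imp (PF.bang r))) := bangAnd _ _
    have k1 := cComp e1 (questMono t)
    have k3 := cComp k1 (ProvC.questImp (PF.bang (CF.quest β)) (PF.bang r))
    exact cIff (ProvC.questBang r) (cMp2 k3 e2)
  · -- □(?α ∨ ?β) ↔ ?α ∨ ?β
    set r := (CF.quest α).or (CF.quest β) with hr
    have h1 : ProvC QHCAx ((CF.quest α).imp r.box) :=
      cComp (questBoxed α) (boxMono (ProvC.orI1 _ _))
    have h2 : ProvC QHCAx ((CF.quest β).imp r.box) :=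
      cComp (questBoxed β) (boxMono (ProvC.orI2 _ _))
    exact cIff (ProvC.questBang r) (ProvC.mp (ProvC.mp (ProvC.orE _ _ _) h1) h2)
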